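/- (Lossless merging for N overlapping chunks, the paper's Theorem 1.) Let S be a string, let Lc ≥ 1 be a chunk length and Lo ≥ 0 an overlap length, and let N be the least positive integer with Lc·N ≥ |S|. For 1 ≤ i ≤ N, let the i-th chunk be s_i = S[Lc·(i−1) : Lc·i + Lo] (the substring of S starting at position Lc·(i−1) of length Lc + Lo, truncated at the end of S), and let T_i = F(s_i). Suppose that for each 1 ≤ i ≤ N−1 there exist indices l_i, r_i and an integer n_i ≥ 1 such that: (i) for every 0 ≤ j ≤ n_i − 1, the (l_i + j)-th token of T_i equals the (r_i + j)-th token of T_{i+1}; (ii) their global start positions in S agree, i.e. Lc·(i−1) plus the start position of the (l_i + j)-th token of T_i relative to s_i equals Lc·i plus the start position of the (r_i + j)-th token of T_{i+1} relative to s_{i+1}; (iii) the total length of the matched run of tokens exceeds T; and (iv) the merge index ranges are well-formed, i.e. r_i + n_i ≤ l_{i+1} + n_{i+1} for 1 ≤ i ≤ N−2. Then the merged token list T = T_1[: l_1 + n_1] ++ T_2[r_1 + n_1 : l_2 + n_2] ++ … ++ T_{N−1}[r_{N−2} + n_{N−2} : l_{N−1} + n_{N−1}] ++ T_N[r_{N−1}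 + n_{N−1} :] equals F(S), the tokenization of the original string without splitting. -/

import Mathlib

variable {α : Type*} [DecidableEq α]

/-- The longest nonempty prefix of `S` belonging to the vocabulary `V`
(falling back to the first character of `S` if no such prefix exists). -/
noncomputable def firstTok (V : Finset (List α)) (S : List α) : List α :=
  ((V.filter (fun w => w ≠ [] ∧ w <+: S)).toList.argmax List.length).getD (S.take 1)

lemma firstTok_ne_nil (V : Finset (List α)) (a : α) (s : List α) :
    firstTok V (a :: s) ≠ [] := by
  unfold firstTok
  cases h : ((V.filter (fun w => w ≠ [] ∧ w <+: (a :: s))).toList.argmax List.length) with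
  | none => simp
  | some w =>
    have hw : w ∈ (V.filter (fun w => w ≠ [] ∧ w <+: (a :: s))).toList :=
      List.argmax_mem h
    rw [Finset.mem_toList, Finset.mem_filter] at hw
    simpa using hw.2.1

/-- Greedy (WordPiece-style) tokenization with vocabulary `V`. -/
noncomputable def F (V : Finset (List α)) : List α → List (List α)
  | [] => []
  | a :: s =>
    firstTok V (a :: s) :: F V ((a :: s).drop (firstTok V (a :: s)).length)
termination_by S => S.length
decreasing_by
  have h := firstTok_ne_nil V a s
  have hpos : 0 < (firstTok V (a :: s)).length := List.length_pos_iff.mpr h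
  simp only [List.length_drop, List.length_cons]
  omega

lemma F_nil (V : Finset (List α)) : F V ([] : List α) = [] := by rw [F]

lemma F_cons (V : Finset (List α)) (X : List α) (hX : X ≠ []) :
    F V X = firstTok V X :: F V (X.drop (firstTok V X).length) := by
  cases X with
  | nil => exact absurd rfl hX
  | cons a s => rw [F]

lemma firstTok_prefix_self (V : Finset (List α)) (X : List α) : firstTok V X <+: X := by
  unfold firstTok
  cases h : ((V.filter (fun w => w ≠ [] ∧ w <+: X)).toList.argmax List.length) with
  | none => simpa using List.take_prefix 1 X
  | some w =>
    have hw := List.argmax_mem h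
    rw [Finset.mem_toList, Finset.mem_filter] at hw
    simpa using hw.2.2

lemma F_flatten (V : Finset (List α)) : ∀ X : List α, (F V X).flatten = X
  | [] => by rw [F_nil]; rfl
  | a :: s => by
    have h1 : 0 < (firstTok V (a::s)).length :=
      List.length_pos_iff.mpr (firstTok_ne_nil V a s)
    rw [F_cons V (a :: s) (List.cons_ne_nil a s), List.flatten_cons,
      F_flatten V ((a :: s).drop (firstTok V (a :: s)).length)]
    have hp := firstTok_prefix_self V (a :: s)
    conv_rhs => rw [← List.take_append_drop (firstTok V (a :: s)).length (a :: s)]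
    rw [← List.prefix_iff_eq_take.mp hp]
termination_by X => X.length
decreasing_by
  simp only [List.length_drop, List.length_cons]; omega

lemma F_sum_length (V : Finset (List α)) (X : List α) :
    ((F V X).map List.length).sum = X.length := by
  rw [← List.length_flatten, F_flatten]

lemma F_drop (V : Finset (List α)) :
    ∀ (k : ℕ) (X : List α),
      F V (X.drop ((((F V X).take k).map List.length).sum)) = (F V X).drop k
  | 0, X => by simp
  | k+1, [] => by simp [F_nil]
  | k+1, a :: s => by
    rw [F_cons V (a :: s) (List.cons_ne_nil a s), List.take_succ_cons, List.map_cons,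
      List.sum_cons, ← List.drop_drop, F_drop V k ((a :: s).drop (firstTok V (a :: s)).length),
      List.drop_succ_cons]

lemma F_getElem (V : Finset (List α)) (X : List α) (k : ℕ) (hk : k < (F V X).length) :
    X.drop ((((F V X).take k).map List.length).sum) ≠ [] ∧
    (F V X)[k]! = firstTok V (X.drop ((((F V X).take k).map List.length).sum)) := by
  have h := F_drop V k X
  rw [List.drop_eq_getElem_cons hk] at h
  have hY : X.drop ((((F V X).take k).map List.length).sum) ≠ [] := by
    intro hnil
    rw [hnil, F_nil] at h
    exact List.cons_ne_nil _ _ h.symm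
  refine ⟨hY, ?_⟩
  rw [F_cons V _ hY] at h
  rw [getElem!_pos (F V X) k hk, ((List.cons.injEq _ _ _ _).mp h).1]

lemma firstTok_eq_of_prefix (V : Finset (List α)) (hsingle : ∀ a : α, [a] ∈ V)
    {Y X : List α} (hY : Y ≠ []) (hYX : Y <+: X) (hlen : V.sup List.length ≤ Y.length) :
    firstTok V Y = firstTok V X := by
  have hfil : V.filter (fun w => w ≠ [] ∧ w <+: Y) = V.filter (fun w => w ≠ [] ∧ w <+: X) := by
    ext w
    simp only [Finset.mem_filter]
    constructor
    · rintro ⟨hw, hne, hp⟩; exact ⟨hw, hne, hp.trans hYX⟩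
    · rintro ⟨hw, hne, hp⟩
      exact ⟨hw, hne, List.prefix_of_prefix_length_le hp hYX
        (le_trans (Finset.le_sup hw) hlen)⟩
  unfold firstTok
  rw [← hfil]
  cases Y with
  | nil => exact absurd rfl hY
  | cons a s =>
    have hmem : [a] ∈ V.filter (fun w => w ≠ [] ∧ w <+: (a :: s)) := by
      rw [Finset.mem_filter]
      exact ⟨hsingle a, by simp, ⟨s, rfl⟩⟩
    cases h : ((V.filter (fun w => w ≠ [] ∧ w <+: (a :: s))).toList.argmax List.length) with
    | none =>
      rw [List.argmax_eq_none] at h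
      rw [Finset.toList_eq_nil] at h
      rw [h] at hmem
      simp at hmem
    | some w => simp

lemma sum_take_succ (L : List (List α)) (k : ℕ) (hk : k < L.length) :
    ((L.take (k+1)).map List.length).sum = ((L.take k).map List.length).sum + L[k]!.length := by
  rw [List.take_succ, List.map_append, List.sum_append, getElem!_pos L k hk]
  simp [List.getElem?_eq_getElem hk]

lemma sum_take_le_sum_take (L : List (List α)) {k k' : ℕ} (h : k ≤ k') :
    ((L.take k).map List.length).sum ≤ ((L.take k').map List.length).sum := by
  obtain ⟨m, rfl⟩ : ∃ m, k' = k + m := ⟨k' - k, by omega⟩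
  rw [List.take_add, List.map_append, List.sum_append]
  exact Nat.le_add_right _ _

lemma sum_take_le_sum (L : List (List α)) (k : ℕ) :
    ((L.take k).map List.length).sum ≤ (L.map List.length).sum := by
  conv_rhs => rw [← List.take_append_drop k L]
  rw [List.map_append, List.sum_append]
  exact Nat.le_add_right _ _

/-- The merged token list from chunk `i` onward, starting at token index `k`
of chunk `i`, with `d` merges remaining. -/
def M (Tk : ℕ → List (List α)) (l r n : ℕ → ℕ) : ℕ → ℕ → ℕ → List (List α)
  | 0, i, k => (Tk i).drop k
  | d+1, i, k => ((Tk i).take (l i + n i)).drop k ++ M Tk l r n d (i+1) (r i + n i)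

lemma M_eq (Tk : ℕ → List (List α)) (l r n : ℕ → ℕ) :
    ∀ (d i k : ℕ), M Tk l r n (d+1) i k =
      ((Tk i).take (l i + n i)).drop k
        ++ ((List.range d).map
            (fun j => ((Tk (i+1+j)).take (l (i+1+j) + n (i+1+j))).drop (r (i+j) + n (i+j)))).flatten
        ++ (Tk (i+1+d)).drop (r (i+d) + n (i+d))
  | 0, i, k => by simp [M]
  | d+1, i, k => by
    show ((Tk i).take (l i + n i)).drop k ++ M Tk l r n (d+1) (i+1) (r i + n i) = _
    rw [M_eq Tk l r n d (i+1)]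
    rw [List.range_succ_eq_map, List.map_cons, List.map_map, List.flatten_cons]
    have hfun : ((fun j => ((Tk (i+1+j)).take (l (i+1+j) + n (i+1+j))).drop
          (r (i+j) + n (i+j))) ∘ Nat.succ)
        = (fun j => ((Tk (i+1+1+j)).take (l (i+1+1+j) + n (i+1+1+j))).drop
          (r (i+1+j) + n (i+1+j))) := by
      funext j
      simp only [Function.comp_apply, Nat.succ_eq_add_one]
      rw [show i+1+(j+1) = i+1+1+j by omega, show i+(j+1) = i+1+j by omega]
    rw [hfun, show i+1+0 = i+1 by omega, show i+0 = i by omega,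
      show i+1+(d+1) = i+1+1+d by omega, show i+(d+1) = i+1+d by omega]
    simp [List.append_assoc]

lemma claim
    (V : Finset (List α)) (hsingle : ∀ a : α, [a] ∈ V)
    (S : List α) (Lc Lo N : ℕ) (hNbig : S.length ≤ Lc * N)
    (Tk : ℕ → List (List α))
    (hTk : ∀ i, Tk i = F V ((S.drop (Lc * i)).take (Lc + Lo)))
    (l r n : ℕ → ℕ)
    (hn : ∀ i, i + 1 < N → 1 ≤ n i)
    (hbound : ∀ i, i + 1 < N →
      l i + n i ≤ (Tk i).length ∧ r i + n i ≤ (Tk (i + 1)).length)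
    (htok : ∀ i, i + 1 < N → ∀ j < n i,
      (Tk i)[l i + j]! = (Tk (i + 1))[r i + j]!)
    (hpos : ∀ i, i + 1 < N → ∀ j < n i,
      Lc * i + (((Tk i).take (l i + j)).map List.length).sum
        = Lc * (i + 1) + (((Tk (i + 1)).take (r i + j)).map List.length).sum)
    (hlong : ∀ i, i + 1 < N →
      V.sup List.length < ((((Tk i).drop (l i)).take (n i)).map List.length).sum)
    (hmono : ∀ i, i + 2 < N → r i + n i ≤ l (i + 1) + n (i + 1)) :
    ∀ d i k, i + d + 1 = N → (d = 0 ∨ k ≤ l i + n i) →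
      F V (S.drop (Lc * i + (((Tk i).take k).map List.length).sum))
        = M Tk l r n d i k := by
  intro d
  induction d with
  | zero =>
    intro i k hiN _
    have hch : (S.drop (Lc * i)).take (Lc + Lo) = S.drop (Lc * i) := by
      apply List.take_of_length_le
      rw [List.length_drop]
      have h1 : Lc * N = Lc * i + Lc := by rw [← hiN]; ring
      omega
    have hTkN : Tk i = F V (S.drop (Lc * i)) := by rw [hTk, hch]
    have hM : M Tk l r n 0 i k = (Tk i).drop k := rfl
    rw [hM, hTkN, ← List.drop_drop]
    exact F_drop V k (S.drop (Lc * i))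
  | succ d ih =>
    intro i k hiN hk
    replace hk : k ≤ l i + n i := hk.resolve_left (by omega)
    have hiN1 : i + 1 < N := by omega
    obtain ⟨m, hm⟩ : ∃ m, l i + n i = k + m := ⟨l i + n i - k, by omega⟩
    clear hk
    revert hm
    induction m generalizing k with
    | zero =>
      intro hm
      have hk' : k = l i + n i := by omega
      subst hk'
      have hni := hn i hiN1
      have hb1 := (hbound i hiN1).1
      have hb2 := (hbound i hiN1).2
      have hlt1 : l i + (n i - 1) < (Tk i).length := by omega
      have hlt2 : r i + (n i - 1) < (Tk (i+1)).length := by omega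
      have hpe : Lc * i + (((Tk i).take (l i + n i)).map List.length).sum
          = Lc * (i+1) + (((Tk (i+1)).take (r i + n i)).map List.length).sum := by
        have h1 := hpos i hiN1 (n i - 1) (by omega)
        have h2 := htok i hiN1 (n i - 1) (by omega)
        rw [show l i + n i = (l i + (n i - 1)) + 1 by omega,
            show r i + n i = (r i + (n i - 1)) + 1 by omega,
            sum_take_succ _ _ hlt1, sum_take_succ _ _ hlt2, h2]
        omega
      have hcond : d = 0 ∨ r i + n i ≤ l (i+1) + n (i+1) := by
        rcases Nat.eq_zero_or_pos d with h|h
        · exact Or.inl h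
        · exact Or.inr (hmono i (by omega))
      rw [hpe, ih (i+1) (r i + n i) (by omega) hcond]
      show M Tk l r n d (i+1) (r i + n i)
        = ((Tk i).take (l i + n i)).drop (l i + n i) ++ M Tk l r n d (i+1) (r i + n i)
      rw [List.drop_eq_nil_of_le (by rw [List.length_take]; omega), List.nil_append]
    | succ m ihm =>
      intro hm
      have hkl : k < l i + n i := by omega
      have hklen : k < (Tk i).length := lt_of_lt_of_le hkl (hbound i hiN1).1
      have key : S.drop (Lc * i + (((Tk i).take k).map List.length).sum) ≠ [] ∧
          firstTok V (S.drop (Lc * i + (((Tk i).take k).map List.length).sum))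
            = (Tk i)[k]! := by
        by_cases hkli : k < l i
        · -- before the run: use the prefix lemma within chunk i
          have hgC := F_getElem V ((S.drop (Lc * i)).take (Lc + Lo)) k
            (by rw [← hTk i]; exact hklen)
          rw [← hTk i] at hgC
          by_cases htr : S.length ≤ Lc * i + (Lc + Lo)
          · have hC : (S.drop (Lc * i)).take (Lc + Lo) = S.drop (Lc * i) := by
              apply List.take_of_length_le
              rw [List.length_drop]; omega
            rw [hC, List.drop_drop] at hgC
            exact ⟨hgC.1, hgC.2.symm⟩
          · push_neg at htr
            set p := (((Tk i).take k).map List.length).sum with hp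
            have hClen : ((S.drop (Lc * i)).take (Lc + Lo)).length = Lc + Lo := by
              rw [List.length_take, List.length_drop]; omega
            have hsumall : ((Tk i).map List.length).sum = Lc + Lo := by
              rw [hTk i, F_sum_length, hClen]
            have hrun := hlong i hiN1
            have hsplit : (((Tk i).take (l i + n i)).map List.length).sum
                = (((Tk i).take (l i)).map List.length).sum
                  + ((((Tk i).drop (l i)).take (n i)).map List.length).sum := by
              rw [List.take_add, List.map_append, List.sum_append]
            have h3 : p ≤ (((Tk i).take (l i)).map List.length).sum :=
              sum_take_le_sum_take _ (le_of_lt hkli)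
            have h4 : (((Tk i).take (l i + n i)).map List.length).sum ≤ Lc + Lo := by
              rw [← hsumall]; exact sum_take_le_sum _ _
            have hYeq : ((S.drop (Lc * i)).take (Lc + Lo)).drop p
                = (S.drop (Lc * i + p)).take (Lc + Lo - p) := by
              rw [List.drop_take, List.drop_drop]
            have hYpre : ((S.drop (Lc * i)).take (Lc + Lo)).drop p <+: S.drop (Lc * i + p) := by
              rw [hYeq]; exact List.take_prefix _ _
            have hYlen : (((S.drop (Lc * i)).take (Lc + Lo)).drop p).length = Lc + Lo - p := by
              rw [List.length_drop, hClen]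
            have hft := firstTok_eq_of_prefix V hsingle hgC.1 hYpre (by rw [hYlen]; omega)
            constructor
            · intro hnil
              rw [hnil, List.prefix_nil] at hYpre
              exact hgC.1 hYpre
            · rw [hgC.2]
              exact hft.symm
        · push_neg at hkli
          set j := k - l i with hj
          have hjn : j < n i := by omega
          have ht := htok i hiN1 j hjn
          have hpj := hpos i hiN1 j hjn
          rw [show l i + j = k by omega] at ht hpj
          have hcond : d = 0 ∨ r i + j ≤ l (i+1) + n (i+1) := by
            rcases Nat.eq_zero_or_pos d with h|h
            · exact Or.inl h
            · have := hmono i (by omega); exact Or.inr (by omega)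
          have hih := ih (i+1) (r i + j) (by omega) hcond
          have hk2 : r i + j < (Tk (i+1)).length := by
            have := (hbound i hiN1).2; omega
          obtain ⟨L, hL⟩ : ∃ L, M Tk l r n d (i+1) (r i + j)
              = (Tk (i+1))[r i + j]! :: L := by
            cases d with
            | zero =>
              refine ⟨(Tk (i+1)).drop (r i + j + 1), ?_⟩
              show (Tk (i+1)).drop (r i + j) = _
              rw [List.drop_eq_getElem_cons hk2, getElem!_pos (Tk (i+1)) _ hk2]
            | succ d' =>
              have hlt : r i + j < l (i+1) + n (i+1) := by
                have := hmono i (by omega); omega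
              have hlt' : r i + j < ((Tk (i+1)).take (l (i+1) + n (i+1))).length := by
                rw [List.length_take]
                have := (hbound (i+1) (by omega)).1
                omega
              refine ⟨((Tk (i+1)).take (l (i+1) + n (i+1))).drop (r i + j + 1)
                ++ M Tk l r n d' ((i+1)+1) (r (i+1) + n (i+1)), ?_⟩
              show ((Tk (i+1)).take (l (i+1) + n (i+1))).drop (r i + j)
                ++ M Tk l r n d' ((i+1)+1) (r (i+1) + n (i+1)) = _
              rw [List.drop_eq_getElem_cons hlt', List.getElem_take,
                getElem!_pos (Tk (i+1)) _ hk2, List.cons_append]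
          rw [hL] at hih
          have hnenil : S.drop (Lc * (i+1)
              + (((Tk (i+1)).take (r i + j)).map List.length).sum) ≠ [] := by
            intro hnil
            rw [hnil, F_nil] at hih
            exact List.cons_ne_nil _ _ hih.symm
          have hfteq : firstTok V (S.drop (Lc * (i+1)
              + (((Tk (i+1)).take (r i + j)).map List.length).sum))
              = (Tk (i+1))[r i + j]! := by
            rw [F_cons V _ hnenil] at hih
            exact ((List.cons.injEq _ _ _ _).mp hih).1
          rw [hpj]
          exact ⟨hnenil, by rw [hfteq]; exact ht.symm⟩
      obtain ⟨hne', hft⟩ := key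
      rw [F_cons V _ hne', hft]
      have hdr : (S.drop (Lc * i + (((Tk i).take k).map List.length).sum)).drop
            ((Tk i)[k]!).length
          = S.drop (Lc * i + (((Tk i).take (k+1)).map List.length).sum) := by
        rw [List.drop_drop, sum_take_succ _ _ hklen, Nat.add_assoc]
      rw [hdr, ihm (k+1) (by omega)]
      show (Tk i)[k]! :: (((Tk i).take (l i + n i)).drop (k+1)
            ++ M Tk l r n d (i+1) (r i + n i))
          = ((Tk i).take (l i + n i)).drop k ++ M Tk l r n d (i+1) (r i + n i)
      have hklen2 : k < ((Tk i).take (l i + n i)).length := by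
        rw [List.length_take]
        have := (hbound i hiN1).1
        omega
      rw [getElem!_pos (Tk i) k hklen, List.drop_eq_getElem_cons hklen2,
        List.getElem_take, List.cons_append]


/-- Theorem 1 of the paper, lossless merging of N overlapping
chunks: `S` is split into `N` chunks `Tk i = F (S[Lc*i : Lc*i + Lc + Lo])`
(`0`-indexed, so `Tk i` is the paper's `T_{i+1}`), where `N` is the least
positive integer with `Lc * N ≥ |S|`.  If each pair of adjacent chunks has a
matched run of `n i ≥ 1` identical tokens (`htok`) whose global start
positions in `S` agree (`hpos`), the matched run is longer than `T` in
characters (`hlong`), and the merge index ranges are well-formed (`hmono`),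
then the merged token list
`Tk 0[: l 0 + n 0] ++ Tk 1[r 0 + n 0 : l 1 + n 1] ++ … ++ Tk (N-1)[r (N-2) + n (N-2) :]`
(which is just `Tk 0` when `N = 1`, i.e. when there is a single chunk and no
merging occurs) equals `F S`, the tokenization of the original string. -/
theorem lossless_parallel_tokenization (V : Finset (List α))
    (hne : ∀ w ∈ V, w ≠ []) (hsingle : ∀ a : α, [a] ∈ V)
    (T : ℕ) (hT : T = V.sup List.length)
    (S : List α) (Lc Lo N : ℕ) (hLc : 1 ≤ Lc)
    (hNpos : 0 < N) (hNbig : S.length ≤ Lc * N)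
    (hNleast : ∀ m : ℕ, 0 < m → S.length ≤ Lc * m → N ≤ m)
    (Tk : ℕ → List (List α))
    (hTk : ∀ i, Tk i = F V ((S.drop (Lc * i)).take (Lc + Lo)))
    (l r n : ℕ → ℕ)
    (hn : ∀ i, i + 1 < N → 1 ≤ n i)
    (hbound : ∀ i, i + 1 < N →
      l i + n i ≤ (Tk i).length ∧ r i + n i ≤ (Tk (i + 1)).length)
    (htok : ∀ i, i + 1 < N → ∀ j < n i,
      (Tk i)[l i + j]! = (Tk (i + 1))[r i + j]!)
    (hpos : ∀ i, i + 1 < N → ∀ j < n i,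
      Lc * i + (((Tk i).take (l i + j)).map List.length).sum
        = Lc * (i + 1) + (((Tk (i + 1)).take (r i + j)).map List.length).sum)
    (hlong : ∀ i, i + 1 < N →
      T < ((((Tk i).drop (l i)).take (n i)).map List.length).sum)
    (hmono : ∀ i, i + 2 < N → r i + n i ≤ l (i + 1) + n (i + 1)) :
    (if N = 1 then Tk 0
     else
       (Tk 0).take (l 0 + n 0)
         ++ ((List.range (N - 2)).map
              (fun i => ((Tk (i + 1)).take (l (i + 1) + n (i + 1))).drop (r i + n i))).flatten
         ++ (Tk (N - 1)).drop (r (N - 2) + n (N - 2)))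
      = F V S := by
  subst hT
  match N, hNpos with
  | 1, _ =>
    rw [if_pos rfl, hTk 0]
    have h1 : (S.drop (Lc * 0)).take (Lc + Lo) = S := by
      rw [Nat.mul_zero, List.drop_zero]
      apply List.take_of_length_le
      omega
    rw [h1]
  | (N' + 2), _ =>
    rw [if_neg (by omega)]
    have h := claim V hsingle S Lc Lo (N' + 2) hNbig Tk hTk l r n hn hbound htok hpos
      hlong hmono (N' + 1) 0 0 (by omega) (Or.inr (Nat.zero_le _))
    simp only [Nat.mul_zero, List.take_zero, List.map_nil, List.sum_nil, Nat.add_zero,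
      List.drop_zero, Nat.zero_add] at h
    rw [h, M_eq Tk l r n N' 0 0]
    have hfun : (fun j => ((Tk (0+1+j)).take (l (0+1+j) + n (0+1+j))).drop
          (r (0+j) + n (0+j)))
        = (fun i => ((Tk (i+1)).take (l (i+1) + n (i+1))).drop (r i + n i)) := by
      funext j
      rw [show 0+1+j = j+1 by omega, show 0+j = j by omega]
    rw [hfun, List.drop_zero,
      show (0:ℕ)+1+N' = N'+2-1 by omega, show (0:ℕ)+N' = N'+2-2 by omega,
      show N'+2-2 = N' from rfl]
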